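/- Let A be a type with two binary operations | and ∗. If axiom C6 ((x|y) ∗ y = x for all x, y) and axiom C4 ((a|b)∗(c|d) = (a∗c)|(b∗d) for all a,b,c,d) hold, then axiom C5 holds: (a∗b)∗(c∗d) = (a∗c)∗(b∗d) for all a,b,c,d. (Lemma 2.1.3(e).) -/
import Mathlib


/-- Lemma 2.1.3(e): axioms C6 and C4 imply axiom C5. -/
theorem conway_C6_C4_imp_C5 {A : Type*} (bar ast : A → A → A)
    (hC6 : ∀ x y : A, ast (bar x y) y = x)
    (hC4 : ∀ a b c d : A, ast (bar a b) (bar c d) = bar (ast a c) (ast b d)) :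
    ∀ a b c d : A, ast (ast a b) (ast c d) = ast (ast a c) (ast b d) := by
  -- First derive C7: bar (ast x y) y = x.
  have hC7 : ∀ x y : A, bar (ast x y) y = x := by
    intro x y
    have h1 : ast (bar x (bar y y)) (bar y y) = x := hC6 x (bar y y)
    have h2 : ast (bar x (bar y y)) (bar y y)
        = bar (ast x y) (ast (bar y y) y) := hC4 x (bar y y) y y
    rw [hC6 y y] at h2
    rw [← h2, h1]
  intro a b c d
  have ha : bar (ast a c) c = a := hC7 a c
  have hb : bar (ast b d) d = b := hC7 b d
  have hab : ast a b = bar (ast (ast a c) (ast b d)) (ast c d) := by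
    calc ast a b = ast (bar (ast a c) c) (bar (ast b d) d) := by rw [ha, hb]
      _ = bar (ast (ast a c) (ast b d)) (ast c d) := hC4 _ _ _ _
  rw [hab, hC6]
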